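/- Let B be a non-degenerate bilinear form on a finite-dimensional space V over an algebraically closed field of characteristic 0, and let T be an isometry whose only eigenvalues are λ and λ^{-1} with λ ≠ ±1, so that V = V_λ ⊕ V_{λ^{-1}} with B vanishing on each summand. Then the map sending w ∈ V_{λ^{-1}} to the linear functional v ↦ B(v, w) is a linear isomorphism from V_{λ^{-1}} onto the dual space of V_λ, and under this identification T acts on V_{λ^{-1}} as the inverse-dual of its action on V_λ. -/

import Mathlib

/-- Let `B` be a non-degenerate symmetric or alternating bilinear form on `V` over an
algebraically closed field of characteristic 0 and `T` an isometry whose only eigenvalues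
are `λ` and `λ⁻¹` with `λ ≠ ±1`, so that `V = V_λ ⊕ V_{λ⁻¹}` with `B` vanishing on each
summand.  Then `w ↦ B(·, w)` is a linear isomorphism from `V_{λ⁻¹}` onto the dual of `V_λ`,
and under this identification `T` acts on `V_{λ⁻¹}` as the inverse-dual of its action on
`V_λ`, i.e. `B(v, T w) = B(T⁻¹ v, w)` for `v ∈ V_λ`, `w ∈ V_{λ⁻¹}`. -/
theorem stmt19 {F V : Type*} [Field F] [IsAlgClosed F] [CharZero F]
    [AddCommGroup V] [Module F V] [FiniteDimensional F V]
    (B : LinearMap.BilinForm F V) (hB : B.Nondegenerate) (hBsa : B.IsSymm ∨ B.IsAlt)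
    (T : V ≃ₗ[F] V) (hT : ∀ v w, B (T v) (T w) = B v w)
    (lam : F) (h1 : lam ≠ 1) (h2 : lam ≠ -1)
    (Vlam Vinv : Submodule F V)
    (hVlam : Vlam = Module.End.maxGenEigenspace T.toLinearMap lam)
    (hVinv : Vinv = Module.End.maxGenEigenspace T.toLinearMap lam⁻¹)
    (hspan : Vlam ⊔ Vinv = ⊤)
    (hz1 : ∀ v ∈ Vlam, ∀ w ∈ Vlam, B v w = 0)
    (hz2 : ∀ v ∈ Vinv, ∀ w ∈ Vinv, B v w = 0) :
    Function.Bijective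
      (((B.flip.domRestrict Vinv).compl₂ Vlam.subtype : Vinv →ₗ[F] Module.Dual F Vlam)) ∧
    (∀ v ∈ Vlam, ∀ w ∈ Vinv, B v (T w) = B (T.symm v) w) := by
  have hrefl : B.IsRefl := hBsa.elim (fun h => h.isRefl) (fun h => h.isRefl)
  set f : Vinv →ₗ[F] Module.Dual F Vlam :=
    (B.flip.domRestrict Vinv).compl₂ Vlam.subtype with hf
  set g : Vlam →ₗ[F] Module.Dual F Vinv :=
    (B.domRestrict Vlam).compl₂ Vinv.subtype with hg
  have hfinj : Function.Injective f := by
    rw [injective_iff_map_eq_zero]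
    intro w hw
    have hw' : ∀ v ∈ Vlam, B v (w : V) = 0 := by
      intro v hv
      have := congrFun (congrArg (fun (φ : Module.Dual F Vlam) => φ.toFun) hw) ⟨v, hv⟩
      simpa [f, LinearMap.flip_apply] using this
    have hz : ∀ x, B (w : V) x = 0 := by
      intro x
      apply hrefl
      have hx : x ∈ Vlam ⊔ Vinv := hspan ▸ Submodule.mem_top
      obtain ⟨a, ha, b, hb, rfl⟩ := Submodule.mem_sup.mp hx
      rw [map_add, LinearMap.add_apply, hw' a ha, hz2 b hb w w.2, add_zero]
    exact Subtype.ext (hB.1 _ hz)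
  have hginj : Function.Injective g := by
    rw [injective_iff_map_eq_zero]
    intro v hv
    have hv' : ∀ w ∈ Vinv, B (v : V) w = 0 := by
      intro w hw
      have := congrFun (congrArg (fun (φ : Module.Dual F Vinv) => φ.toFun) hv) ⟨w, hw⟩
      simpa [g] using this
    have hz : ∀ x, B (v : V) x = 0 := by
      intro x
      have hx : x ∈ Vlam ⊔ Vinv := hspan ▸ Submodule.mem_top
      obtain ⟨a, ha, b, hb, rfl⟩ := Submodule.mem_sup.mp hx
      rw [map_add, hz1 v v.2 a ha, hv' b hb, add_zero]
    exact Subtype.ext (hB.1 _ hz)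
  have hd1 : Module.finrank F Vinv ≤ Module.finrank F Vlam := by
    have := LinearMap.finrank_le_finrank_of_injective hfinj
    rwa [Subspace.dual_finrank_eq] at this
  have hd2 : Module.finrank F Vlam ≤ Module.finrank F Vinv := by
    have := LinearMap.finrank_le_finrank_of_injective hginj
    rwa [Subspace.dual_finrank_eq] at this
  have hdim : Module.finrank F Vinv = Module.finrank F (Module.Dual F Vlam) := by
    rw [Subspace.dual_finrank_eq]
    exact le_antisymm hd1 hd2
  refine ⟨⟨hfinj, (LinearMap.injective_iff_surjective_of_finrank_eq_finrank hdim).mp hfinj⟩, ?_⟩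
  intro v _ w _
  conv_lhs => rw [← T.apply_symm_apply v]
  exact hT _ _
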